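/- Let G = A * B be a free product with |A| ≥ 3, |B| ≥ 2, and suppose neither A nor B contains an element of order at least 3. Then the palindromic width of G is infinite. -/

import Mathlib

open Monoid Monoid.CoprodI

attribute [local instance] Classical.propDecidable

/-- The list of syllables of the reduced word representing `g`. -/
noncomputable def syllables {ι : Type*} {M : ι → Type*} [∀ i, Group (M i)]
    (g : CoprodI M) : List (Σ i, M i) :=
  letI := Classical.decEq ι
  letI : ∀ i, DecidableEq (M i) := fun _ => Classical.decEq _
  (Word.equiv g).toList

/-- `g` is a palindrome iff its reduced word reads the same backwards. -/
noncomputable def IsPalindrome {ι : Type*} {M : ι → Type*} [∀ i, Group (M i)]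
    (g : CoprodI M) : Prop :=
  (syllables g).reverse = syllables g

/-! ### Counting occurrences of patterns in lists -/

namespace PalAux

variable {α : Type*}

/-- positions at which `w` occurs in `L`. -/
noncomputable def occs (w L : List α) : Finset ℕ :=
  (Finset.range (L.length + 1)).filter (fun i => w <+: L.drop i)

/-- The number of occurrences of `w` as an infix of `L`. -/
noncomputable def cnt (w L : List α) : ℕ := (occs w L).card

lemma mem_occs {w L : List α} {i : ℕ} :
    i ∈ occs w L ↔ i ≤ L.length ∧ w <+: L.drop i := by
  simp [occs, Nat.lt_succ_iff]

lemma add_length_le_of_mem_occs {w L : List α} {i : ℕ} (hw : w ≠ [])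
    (h : i ∈ occs w L) : i + w.length ≤ L.length := by
  rw [mem_occs] at h
  have h1 : w.length ≤ (L.drop i).length := h.2.length_le
  have h2 : 0 < w.length := List.length_pos_iff.2 hw
  simp only [List.length_drop] at h1
  omega

lemma cnt_eq_zero_of_lt {w L : List α} (h : L.length < w.length) : cnt w L = 0 := by
  rw [cnt, Finset.card_eq_zero]
  ext i
  simp only [Finset.notMem_empty, iff_false]
  intro hi
  have := add_length_le_of_mem_occs (by rintro rfl; simp at h) hi
  omega

lemma prefix_of_prefix_append {w x y : List α} (h : w <+: x ++ y)
    (hl : w.length ≤ x.length) : w <+: x := by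
  obtain ⟨t, ht⟩ := h
  have h2 : x.take w.length = w := by
    rw [← List.take_append_of_le_length hl (l₂ := y), ← ht, List.take_left]
  exact h2 ▸ List.take_prefix _ _

lemma cnt_append_ge (w x y : List α) (hw : w ≠ []) :
    cnt w x + cnt w y ≤ cnt w (x ++ y) := by
  classical
  have hsub : (occs w x) ∪ ((occs w y).image (x.length + ·)) ⊆ occs w (x ++ y) := by
    intro i hi
    rcases Finset.mem_union.1 hi with hi | hi
    · rw [mem_occs] at hi ⊢
      refine ⟨by simp; omega, ?_⟩
      rw [List.drop_append_of_le_length hi.1]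
      exact hi.2.trans (List.prefix_append _ _)
    · obtain ⟨j, hj, rfl⟩ := Finset.mem_image.1 hi
      rw [mem_occs] at hj ⊢
      refine ⟨by simp; omega, ?_⟩
      rw [List.drop_length_add_append]
      exact hj.2
  have hdisj : Disjoint (occs w x) ((occs w y).image (x.length + ·)) := by
    rw [Finset.disjoint_left]
    intro i hi hi'
    have h1 := add_length_le_of_mem_occs hw hi
    have h2 : 0 < w.length := List.length_pos_iff.2 hw
    obtain ⟨j, _, rfl⟩ := Finset.mem_image.1 hi'
    omega
  calc cnt w x + cnt w y
      = (occs w x).card + ((occs w y).image (x.length + ·)).card := by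
        rw [Finset.card_image_of_injective _ (fun a b => by omega)]; rfl
    _ = ((occs w x) ∪ ((occs w y).image (x.length + ·))).card :=
        (Finset.card_union_of_disjoint hdisj).symm
    _ ≤ _ := Finset.card_le_card hsub

lemma cnt_append_le (w x y : List α) :
    cnt w (x ++ y) ≤ cnt w x + cnt w y + w.length := by
  classical
  have hsub : occs w (x ++ y) ⊆
      (occs w x) ∪ ((occs w y).image (x.length + ·)) ∪
      (Finset.Ico (x.length + 1 - w.length) x.length) := by
    intro i hi
    rw [mem_occs] at hi
    simp only [Finset.mem_union, Finset.mem_Ico]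
    rcases le_or_gt x.length i with hxi | hxi
    · refine Or.inl (Or.inr ?_)
      refine Finset.mem_image.2 ⟨i - x.length, ?_, by omega⟩
      rw [mem_occs]
      have hlen : (x ++ y).length = x.length + y.length := by simp
      constructor
      · omega
      · have h3 : (x ++ y).drop i = y.drop (i - x.length) := by
          rw [List.drop_append, List.drop_of_length_le (by omega),
            List.nil_append]
        rw [← h3]; exact hi.2
    · rcases le_or_gt (i + w.length) x.length with hiw | hiw
      · refine Or.inl (Or.inl ?_)
        rw [mem_occs]
        refine ⟨by omega, ?_⟩
        rw [List.drop_append_of_le_length (by omega)] at hi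
        exact prefix_of_prefix_append hi.2 (by simp; omega)
      · exact Or.inr ⟨by omega, hxi⟩
  calc cnt w (x ++ y) ≤ _ := Finset.card_le_card hsub
    _ ≤ ((occs w x) ∪ ((occs w y).image (x.length + ·))).card +
        (Finset.Ico (x.length + 1 - w.length) x.length).card := Finset.card_union_le _ _
    _ ≤ ((occs w x).card + ((occs w y).image (x.length + ·)).card) +
        (Finset.Ico (x.length + 1 - w.length) x.length).card := by
        gcongr; exact Finset.card_union_le _ _
    _ ≤ cnt w x + cnt w y + w.length := by
        rw [Nat.card_Ico]
        have := Finset.card_image_le (f := (x.length + ·)) (s := occs w y)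
        unfold cnt
        omega

lemma occ_reverse_iff {w L : List α} (hw : w ≠ []) {i : ℕ} (hi : i + w.length ≤ L.length) :
    (w <+: L.reverse.drop i) ↔ (w.reverse <+: L.drop (L.length - w.length - i)) := by
  rw [← List.reverse_suffix]
  rw [show (L.reverse.drop i).reverse = L.take (L.length - i) by
    rw [List.reverse_drop, List.reverse_reverse, List.length_reverse]]
  rw [List.suffix_iff_eq_drop, List.prefix_iff_eq_take]
  simp only [List.length_take, List.length_reverse]
  have h1 : min (L.length - i) L.length = L.length - i := by omega
  rw [h1, show L.length - i - w.length = L.length - w.length - i from by omega,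
    show List.drop (L.length - w.length - i) (List.take (L.length - i) L)
       = List.take w.length (List.drop (L.length - w.length - i) L) from by
      rw [List.drop_take]; congr 1; omega]

lemma cnt_reverse (w L : List α) (hw : w ≠ []) :
    cnt w L.reverse = cnt w.reverse L := by
  classical
  unfold cnt
  apply Finset.card_bij' (fun i _ => L.length - w.length - i)
    (fun j _ => L.length - w.length - j)
  · intro i hi
    have hb := add_length_le_of_mem_occs hw hi
    rw [List.length_reverse] at hb
    rw [mem_occs] at hi ⊢
    rw [List.length_reverse] at hi
    refine ⟨by omega, ?_⟩
    rw [← occ_reverse_iff hw hb]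
    exact hi.2
  · intro j hj
    have hb := add_length_le_of_mem_occs (by simpa using hw) hj
    rw [List.length_reverse] at *
    rw [mem_occs] at hj ⊢
    refine ⟨by simp only [List.length_reverse]; omega, ?_⟩
    rw [occ_reverse_iff hw (by omega),
      show L.length - w.length - (L.length - w.length - j) = j from by omega]
    exact hj.2
  · intro i hi
    have hb := add_length_le_of_mem_occs hw hi
    rw [List.length_reverse] at hb
    omega
  · intro j hj
    have hb := add_length_le_of_mem_occs (by simpa using hw) hj
    rw [List.length_reverse] at hb
    omega

lemma one_le_cnt_self {w : List α} (hw : w ≠ []) : 1 ≤ cnt w w := by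
  rw [cnt, Finset.one_le_card]
  exact ⟨0, by simp [occs, Finset.mem_filter]⟩

/-- The Brooks-type counting function. -/
noncomputable def Fc (w L : List α) : ℤ := (cnt w L : ℤ) - (cnt w.reverse L : ℤ)

lemma Fc_reverse {w : List α} (hw : w ≠ []) (L : List α) : Fc w L.reverse = - Fc w L := by
  have h1 := cnt_reverse w L hw
  have h2 := cnt_reverse w.reverse L (by simpa using hw)
  rw [List.reverse_reverse] at h2
  unfold Fc
  omega

lemma Fc_short {w L : List α} (h : L.length < w.length) : Fc w L = 0 := by
  unfold Fc
  rw [cnt_eq_zero_of_lt h, cnt_eq_zero_of_lt (by simpa using h)]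
  simp

lemma Fc_append {w : List α} (hw : w ≠ []) (x y : List α) :
    |Fc w (x ++ y) - Fc w x - Fc w y| ≤ 2 * w.length := by
  have h1 := cnt_append_ge w x y hw
  have h2 := cnt_append_le w x y
  have h3 := cnt_append_ge w.reverse x y (by simpa using hw)
  have h4 := cnt_append_le w.reverse x y
  rw [List.length_reverse] at h4
  rw [abs_le]
  unfold Fc
  omega

lemma Fc_append3 {w : List α} (hw : w ≠ []) (x m y : List α) (hm : m.length < w.length) :
    |Fc w (x ++ m ++ y) - Fc w x - Fc w y| ≤ 4 * w.length := by
  have h1 := Fc_append hw (x ++ m) y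
  have h2 := Fc_append hw x m
  have h3 := Fc_short hm (w := w)
  rw [abs_le] at *
  omega

lemma prefix_append_cases {v a b : List α} (h : v <+: a ++ b) :
    v <+: a ∨ ∃ v', v = a ++ v' ∧ v' <+: b := by
  rcases le_or_gt v.length a.length with hl | hl
  · exact Or.inl (prefix_of_prefix_append h hl)
  · right
    have hv := List.prefix_iff_eq_take.1 h
    refine ⟨b.take (v.length - a.length), ?_, List.take_prefix _ _⟩
    conv_lhs => rw [hv]
    rw [List.take_append, List.take_of_length_le (by omega)]

lemma suffix_append_cases {t x y : List α} (h : t <:+ x ++ y) :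
    t <:+ y ∨ ∃ t', t' <:+ x ∧ t = t' ++ y := by
  have h' : t.reverse <+: y.reverse ++ x.reverse := by
    rw [← List.reverse_append]
    exact List.reverse_prefix.2 h
  rcases prefix_append_cases h' with h1 | ⟨v', hv1, hv2⟩
  · exact Or.inl (List.reverse_prefix.1 h1)
  · right
    refine ⟨v'.reverse, ?_, ?_⟩
    · have := List.reverse_suffix.2 hv2
      rwa [List.reverse_reverse] at this
    · have := congrArg List.reverse hv1
      rwa [List.reverse_reverse, List.reverse_append, List.reverse_reverse] at this

end PalAux

/-! ### Reduced words in free products of exponent-two groups -/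

namespace PalAux

open Monoid.CoprodI.Word

variable {ι : Type*} [DecidableEq ι] {M : ι → Type*} [∀ i, Group (M i)]
  [∀ i, DecidableEq (M i)]

lemma smul_toList_of_fstIdx_ne {i : ι} {m : M i} (hm : m ≠ 1) (R : Word M)
    (h : R.fstIdx ≠ some i) :
    (of m • R).toList = ⟨i, m⟩ :: R.toList := by
  rw [of_smul_def, equivPair_eq_of_fstIdx_ne h]
  simp only [mul_one]
  rw [rcons, dif_neg hm]
  simp [cons]

lemma equivPair_of_toList_eq {i : ι} {z : M i} {t : List (Σ i, M i)} {R : Word M}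
    (h : R.toList = ⟨i, z⟩ :: t) :
    (equivPair i R).head = z ∧ (equivPair i R).tail.toList = t := by
  have hr : rcons (equivPair i R) = R := by
    rw [← equivPair_symm]; exact (equivPair i).symm_apply_apply R
  by_cases h1 : (equivPair i R).head = 1
  · exfalso
    rw [rcons, dif_pos h1] at hr
    have := (equivPair i R).fstIdx_ne
    rw [hr] at this
    apply this
    rw [fstIdx, h]
    rfl
  · rw [rcons, dif_neg h1] at hr
    have h2 := congrArg Word.toList hr
    rw [cons_toList, h] at h2
    rw [List.cons.injEq] at h2
    obtain ⟨h3, h4⟩ := h2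
    injection h3 with h3a h3b
    exact ⟨h3b, h4⟩

lemma smul_toList_head {i : ι} (m : M i) {z : M i} {t : List (Σ i, M i)} {R : Word M}
    (h : R.toList = ⟨i, z⟩ :: t) :
    (of m • R).toList = if m * z = 1 then t else ⟨i, m * z⟩ :: t := by
  obtain ⟨h1, h2⟩ := equivPair_of_toList_eq h
  rw [of_smul_def, h1]
  by_cases hz : m * z = 1
  · rw [rcons, if_pos hz]; simp [rcons, hz, h2]
  · rw [if_neg hz, rcons, dif_neg hz]
    simp [cons, h2]

lemma fstIdx_eq_none {R : Word M} (h : R.toList = []) : R.fstIdx = none := by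
  rw [fstIdx, h]; rfl

lemma fstIdx_eq_some {R : Word M} {a : Σ i, M i} {t} (h : R.toList = a :: t) :
    R.fstIdx = some a.1 := by
  rw [fstIdx, h]; rfl

/-- The key structural lemma about multiplication of reduced words in a free
product all of whose factors have exponent two. -/
theorem seam (hM : ∀ (i : ι) (x : M i), x * x = 1) (u : Word M) : ∀ w : Word M,
    ∃ u₁ u₂ m₁ m₂ m₃ v₂ : List (Σ i, M i),
      u.toList = u₁ ++ m₁ ++ u₂ ∧
      w.toList = u₂.reverse ++ m₂ ++ v₂ ∧
      (u.prod • w).toList = u₁ ++ m₃ ++ v₂ ∧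
      ((m₁ = [] ∧ m₂ = [] ∧ m₃ = []) ∨
        (∃ (ℓ : ι) (y z : M ℓ), m₁ = [⟨ℓ, y⟩] ∧ m₂ = [⟨ℓ, z⟩] ∧ m₃ = [⟨ℓ, y * z⟩])) := by
  induction u using Word.consRecOn with
  | empty =>
    intro w
    refine ⟨[], [], [], [], [], w.toList, by simp, by simp, ?_, Or.inl ⟨rfl, rfl, rfl⟩⟩
    rw [prod_empty, one_smul]
    simp
  | cons i m u' hne hm1 ih =>
    intro w
    obtain ⟨u₁, u₂, m₁, m₂, m₃, v₂, hu', hw, hR, hstr⟩ := ih w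
    have hprod : (of m * u'.prod) • w = of m • (u'.prod • w) := by rw [mul_smul]
    have hgoal_list : (cons m u' hne hm1).toList = ⟨i, m⟩ :: u'.toList := by simp [cons]
    rw [show (cons m u' hne hm1).prod = of m * u'.prod from prod_cons i m u' hm1 hne, hprod]
    rcases u₁ with _ | ⟨a, u₁'⟩
    case cons =>
      -- the first letter of the previous product survives; we prepend
      have ha : a.1 ≠ i := by
        have h1 : u'.fstIdx = some a.1 :=
          fstIdx_eq_some (a := a) (t := u₁' ++ m₁ ++ u₂) (by rw [hu']; simp)
        intro hc; apply hne; rw [h1, hc]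
      have hres : (of m • (u'.prod • w)).toList = ⟨i, m⟩ :: (u'.prod • w).toList := by
        apply smul_toList_of_fstIdx_ne hm1
        rw [fstIdx_eq_some (a := a) (t := u₁' ++ m₃ ++ v₂) (by rw [hR]; simp)]
        simpa using ha
      exact ⟨⟨i, m⟩ :: a :: u₁', u₂, m₁, m₂, m₃, v₂,
        by rw [hgoal_list, hu']; simp, hw, by rw [hres, hR]; simp, hstr⟩
    case nil =>
      rcases hstr with ⟨hm₁e, hm₂e, hm₃e⟩ | ⟨ℓ, y, z, hm₁e, hm₂e, hm₃e⟩
      · -- pure cancellation state so far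
        subst hm₁e hm₂e hm₃e
        simp only [List.nil_append] at hu' hw hR
        rcases v₂ with _ | ⟨⟨j, z⟩, v₂'⟩
        · have hres : (of m • (u'.prod • w)).toList = [⟨i, m⟩] := by
            rw [smul_toList_of_fstIdx_ne hm1 _ (by rw [fstIdx_eq_none hR]; simp), hR]
          exact ⟨[⟨i, m⟩], u₂, [], [], [], [], by simp [hgoal_list, hu'],
            by simpa using hw, by simp [hres], Or.inl ⟨rfl, rfl, rfl⟩⟩
        · by_cases hij : j = i
          · subst hij
            by_cases hz : m * z = 1
            · -- cancellation continues
              have hzm : z = m := mul_left_cancel (hz.trans (hM j m).symm)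
              have hres : (of m • (u'.prod • w)).toList = v₂' := by
                rw [smul_toList_head m hR, if_pos hz]
              refine ⟨[], ⟨j, m⟩ :: u₂, [], [], [], v₂', by simp [hgoal_list, hu'],
                ?_, by simp [hres], Or.inl ⟨rfl, rfl, rfl⟩⟩
              rw [hw, hzm]
              simp
            · -- merge
              have hres : (of m • (u'.prod • w)).toList = ⟨j, m * z⟩ :: v₂' := by
                rw [smul_toList_head m hR, if_neg hz]
              exact ⟨[], u₂, [⟨j, m⟩], [⟨j, z⟩], [⟨j, m * z⟩], v₂',
                by simp [hgoal_list, hu'], by simpa using hw, by simp [hres],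
                Or.inr ⟨j, m, z, rfl, rfl, rfl⟩⟩
          · -- prepend
            have hres : (of m • (u'.prod • w)).toList = ⟨i, m⟩ :: (u'.prod • w).toList := by
              apply smul_toList_of_fstIdx_ne hm1
              rw [fstIdx_eq_some hR]
              simp [hij]
            exact ⟨[⟨i, m⟩], u₂, [], [], [], ⟨j, z⟩ :: v₂', by simp [hgoal_list, hu'],
              by simpa using hw, by simp [hres, hR], Or.inl ⟨rfl, rfl, rfl⟩⟩
      · -- merge state so far: the merged letter's index differs from i, so prepend
        subst hm₁e hm₂e hm₃e
        have hℓ : ℓ ≠ i := by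
          have h1 : u'.fstIdx = some ℓ :=
            fstIdx_eq_some (a := ⟨ℓ, y⟩) (t := u₂) (by rw [hu']; simp)
          intro hc; apply hne; rw [h1, hc]
        have hres : (of m • (u'.prod • w)).toList = ⟨i, m⟩ :: (u'.prod • w).toList := by
          apply smul_toList_of_fstIdx_ne hm1
          rw [fstIdx_eq_some (a := ⟨ℓ, y * z⟩) (t := v₂) (by rw [hR]; simp)]
          simp [hℓ]
        exact ⟨[⟨i, m⟩], u₂, [⟨ℓ, y⟩], [⟨ℓ, z⟩], [⟨ℓ, y * z⟩], v₂,
          by simp [hgoal_list, hu'], hw, by simp [hres, hR],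
          Or.inr ⟨ℓ, y, z, rfl, rfl, rfl⟩⟩

lemma equiv_apply (g : CoprodI M) : Word.equiv g = g • Word.empty := rfl

lemma equiv_one : Word.equiv (1 : CoprodI M) = Word.empty := by
  rw [equiv_apply, one_smul]

lemma equiv_prod (w : Word M) : Word.equiv w.prod = w :=
  Word.equiv.apply_symm_apply w

lemma equiv_mul (g h : CoprodI M) :
    Word.equiv (g * h) = (Word.equiv g).prod • (Word.equiv h) := by
  rw [equiv_apply, mul_smul, equiv_apply]
  congr 1
  exact (Word.equiv.symm_apply_apply g).symm

end PalAux

/-- If `|A| ≥ 3`, `|B| ≥ 2` and neither `A` nor `B` contains an element of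
order at least 3, then the palindromic width of `A * B` is infinite. -/
theorem palindromic_width_infinite_of_exponent_two {M : Bool → Type*} [∀ b, Group (M b)]
    (hA : 3 ≤ Cardinal.mk (M true)) (hB : 2 ≤ Cardinal.mk (M false))
    (hA2 : ∀ x : M true, x * x = 1) (hB2 : ∀ x : M false, x * x = 1) :
    ∀ k : ℕ, ∃ g : CoprodI M, ¬ ∃ L : List (CoprodI M),
      L.length ≤ k ∧ (∀ p ∈ L, IsPalindrome p) ∧ L.prod = g := by
  intro k
  obtain ⟨a₁, ha₁⟩ := (Cardinal.two_le_iff' (1 : M true)).1 (le_trans (by norm_num) hA)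
  obtain ⟨a₂, ha₂1, ha₂a⟩ := Cardinal.three_le hA 1 a₁
  obtain ⟨c, hc⟩ := (Cardinal.two_le_iff' (1 : M false)).1 hB
  letI instI : DecidableEq Bool := Classical.decEq Bool
  letI instM : ∀ b, DecidableEq (M b) := fun _ => Classical.decEq _
  have hM : ∀ (b : Bool) (x : M b), x * x = 1 := by
    intro b
    cases b
    · exact hB2
    · exact hA2
  set P : List (Σ b, M b) := [⟨true, a₁⟩, ⟨false, c⟩, ⟨true, a₁⟩, ⟨false, c⟩,
    ⟨true, a₂⟩, ⟨false, c⟩, ⟨true, a₁⟩, ⟨false, c⟩, ⟨true, a₂⟩, ⟨false, c⟩,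
    ⟨true, a₂⟩, ⟨false, c⟩] with hP
  have hPne : P ≠ [] := by simp [hP]
  have hPlen : P.length = 12 := by simp [hP]
  have hsyl : ∀ g : CoprodI M, syllables g = (Word.equiv g).toList := fun _ => rfl
  -- the defect bound for the Brooks counting function
  have hdefect : ∀ g h : CoprodI M,
      |PalAux.Fc P (syllables (g * h)) - PalAux.Fc P (syllables g) - PalAux.Fc P (syllables h)|
        ≤ 144 := by
    intro g h
    obtain ⟨u₁, u₂, m₁, m₂, m₃, v₂, hu, hw, hR, hstr⟩ :=
      PalAux.seam hM (Word.equiv g) (Word.equiv h)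
    rw [← PalAux.equiv_mul] at hR
    rw [hsyl g, hsyl h, hsyl (g * h), hu, hw, hR]
    have hlm : m₁.length < P.length ∧ m₂.length < P.length ∧ m₃.length < P.length := by
      rcases hstr with ⟨rfl, rfl, rfl⟩ | ⟨ℓ, y, z, rfl, rfl, rfl⟩ <;> simp [hPlen]
    have h1 := PalAux.Fc_append3 hPne u₁ m₁ u₂ hlm.1
    have h2 := PalAux.Fc_append3 hPne u₂.reverse m₂ v₂ hlm.2.1
    have h3 := PalAux.Fc_append3 hPne u₁ m₃ v₂ hlm.2.2
    have h4 := PalAux.Fc_reverse hPne u₂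
    rw [abs_le] at h1 h2 h3 ⊢
    rw [hPlen] at h1 h2 h3
    push_cast at h1 h2 h3
    constructor <;> linarith [h1.1, h1.2, h2.1, h2.2, h3.1, h3.2]
  have hpal0 : ∀ p : CoprodI M, IsPalindrome p → PalAux.Fc P (syllables p) = 0 := by
    intro p hp
    have h1 : (syllables p).reverse = syllables p := hp
    have h2 := PalAux.Fc_reverse hPne (syllables p)
    rw [h1] at h2
    linarith
  have hone : syllables (1 : CoprodI M) = ([] : List (Σ b, M b)) := by
    rw [hsyl, PalAux.equiv_one]
    rfl
  have hprodbd : ∀ L : List (CoprodI M), (∀ p ∈ L, IsPalindrome p) →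
      |PalAux.Fc P (syllables L.prod)| ≤ 144 * L.length := by
    intro L
    induction L with
    | nil =>
      intro _
      rw [List.prod_nil, hone, PalAux.Fc_short (by simp [hPlen])]
      simp
    | cons p L ih =>
      intro hmem
      rw [List.prod_cons]
      have h1 := hdefect p L.prod
      have h2 := ih (fun q hq => hmem q (List.mem_cons_of_mem _ hq))
      have h3 := hpal0 p (hmem p (List.mem_cons_self))
      rw [abs_le] at h1 h2 ⊢
      simp only [List.length_cons]
      push_cast
      push_cast at h2
      constructor <;> linarith [h1.1, h1.2, h2.1, h2.2]
  -- the witness element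
  set n : ℕ := 144 * k + 1 with hn
  set LL : List (Σ b, M b) := (List.replicate n P).flatten with hLL
  have hnocc1 : ∀ l ∈ P, Sigma.snd l ≠ 1 := by
    intro l hl
    rw [hP] at hl
    fin_cases hl <;> first | exact ha₁ | exact ha₂1 | exact hc
  have hWordne : ∀ l ∈ LL, Sigma.snd l ≠ 1 := by
    intro l hl
    rw [hLL] at hl
    obtain ⟨l', hl', hml⟩ := List.mem_flatten.1 hl
    rw [List.eq_of_mem_replicate hl'] at hml
    exact hnocc1 l hml
  have hchain : ∀ m : ℕ, ((List.replicate m P).flatten).Chain'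
        (fun l l' : Σ b, M b => l.1 ≠ l'.1) ∧
      (∀ x ∈ ((List.replicate m P).flatten).head?, x.1 = true) := by
    intro m
    induction m with
    | zero => simp [List.Chain']
    | succ m ih =>
      rw [List.replicate_succ, List.flatten_cons]
      constructor
      · rw [List.Chain', List.isChain_append]
        refine ⟨by simp [hP], ih.1, ?_⟩
        intro x hx y hy
        have hx' : (⟨false, c⟩ : Σ b, M b) = x := by
          rw [hP] at hx
          simpa using hx
        have hy' := ih.2 y hy
        rw [← hx', hy']
        simp
      · intro x hx
        rw [hP] at hx
        simp only [List.cons_append, List.head?_cons, Option.mem_def,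
          Option.some.injEq] at hx
        rw [← hx]
  -- the reversed pattern never occurs in a power of the pattern
  have hrev : P.reverse = [⟨false, c⟩, ⟨true, a₂⟩, ⟨false, c⟩, ⟨true, a₂⟩, ⟨false, c⟩,
      ⟨true, a₁⟩, ⟨false, c⟩, ⟨true, a₂⟩, ⟨false, c⟩, ⟨true, a₁⟩, ⟨false, c⟩,
      ⟨true, a₁⟩] := by
    rw [hP]
    rfl
  have hkey : ∀ t', t' <:+ P → ¬ (P.reverse <+: t' ++ P) := by
    intro t' ht' hpre
    rw [hrev] at hpre
    rw [hP] at ht'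
    simp only [List.suffix_cons_iff, List.suffix_nil] at ht'
    rw [hP] at hpre
    rcases ht' with rfl | rfl | rfl | rfl | rfl | rfl | rfl | rfl | rfl | rfl | rfl | rfl | rfl <;>
      simp [List.cons_prefix_cons, ha₂a] at hpre
  have hnocc : ∀ (m : ℕ) (t : List (Σ b, M b)),
      t <:+ (List.replicate m P).flatten → ¬ (P.reverse <+: t) := by
    intro m
    induction m with
    | zero =>
      intro t ht hpre
      rw [List.replicate_zero, List.flatten_nil, List.suffix_nil] at ht
      subst ht
      rw [List.prefix_nil] at hpre
      exact hPne (by simpa using hpre)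
    | succ m ih =>
      intro t ht hpre
      rw [List.replicate_succ, List.flatten_cons] at ht
      rcases PalAux.suffix_append_cases ht with h1 | ⟨t', ht', rfl⟩
      · exact ih t h1 hpre
      · rcases m with _ | m'
        · rw [List.replicate_zero, List.flatten_nil, List.append_nil] at hpre
          exact hkey t' ht' (hpre.trans (List.prefix_append _ _))
        · rw [List.replicate_succ, List.flatten_cons, ← List.append_assoc] at hpre
          refine hkey t' ht' (PalAux.prefix_of_prefix_append hpre ?_)
          simp only [List.length_append, List.length_reverse]
          exact Nat.le_add_left _ _
  have hcnt2 : PalAux.cnt P.reverse LL = 0 := by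
    rw [PalAux.cnt, Finset.card_eq_zero]
    ext i
    simp only [Finset.notMem_empty, iff_false]
    intro hi
    exact hnocc n (LL.drop i) (List.drop_suffix i LL) (PalAux.mem_occs.1 hi).2
  have hcnt1 : ∀ m : ℕ, m ≤ PalAux.cnt P (List.replicate m P).flatten := by
    intro m
    induction m with
    | zero => simp
    | succ m ih =>
      rw [List.replicate_succ, List.flatten_cons]
      calc (m + 1 : ℕ) ≤ PalAux.cnt P P + PalAux.cnt P (List.replicate m P).flatten := by
            have h6 := PalAux.one_le_cnt_self hPne
            calc m + 1 = 1 + m := Nat.add_comm _ _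
              _ ≤ _ := Nat.add_le_add h6 ih
        _ ≤ _ := PalAux.cnt_append_ge _ _ _ hPne
  -- assemble
  refine ⟨Monoid.CoprodI.Word.prod ⟨LL, hWordne, hchain n |>.1⟩, ?_⟩
  rintro ⟨L, hlen, hpal, hprod⟩
  have hb := hprodbd L hpal
  rw [hprod] at hb
  have hsg : syllables (Monoid.CoprodI.Word.prod ⟨LL, hWordne, (hchain n).1⟩) = LL := by
    rw [hsyl, PalAux.equiv_prod]
  rw [hsg] at hb
  have hge : (n : ℤ) ≤ PalAux.Fc P LL := by
    have := hcnt1 n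
    rw [← hLL] at this
    unfold PalAux.Fc
    rw [hcnt2]
    have h5 : (n : ℤ) ≤ (PalAux.cnt P LL : ℤ) := by exact_mod_cast this
    push_cast
    linarith
  rw [abs_le] at hb
  have hlk : (144 : ℤ) * L.length ≤ 144 * k := by
    have : (L.length : ℤ) ≤ k := by exact_mod_cast hlen
    linarith
  have hn' : (n : ℤ) = 144 * k + 1 := by rw [hn]; push_cast; ring
  linarith [hb.2]
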